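/- Let F_{3,2} : ℝ^5 → ℝ^5 be given by F_{3,2}(x,y,u1,u2,u3) = (x³+y²+u1·x+u2·y+u3·x², x·y, u1, u2, u3). Then for every point q = (x,y,u1,u2,u3) ∈ ℝ^5, the derivative of F_{3,2} at q applied to ξ_5(q) = (−(1/3)x³−(1/9)u3·x²+(−(2/9)u1+(2/27)u3²)x, (1/3)x²y+(1/9)u3·xy, −(4/3)u2·xy+(2/9)u1²−(2/27)u1·u3², −(2/9)u3·xy, x³+y²+u1·x+u2·y+u3·x²+(5/9)u1·u3−(4/27)u3³) equals η_5(F_{3,2}(q)), where η_5(X,Y,U1,U2,U3) = ((5/3)Y²+(1/9)U2·U3·Y, (−(2/9)U1+(2/27)U3²)Y, −(4/3)U2·Y+(2/9)U1²−(2/27)U1·U3², −(2/9)U3·Y, X+(5/9)U1·U3−(4/27)U3³). In particular η_5 is liftable over F_{3,2}. -/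

import Mathlib

/-- The stable map `F₃₂` of discrete algebra type `B_{3,2}`. -/
noncomputable def F32 : ℝ × ℝ × ℝ × ℝ × ℝ → ℝ × ℝ × ℝ × ℝ × ℝ :=
  fun (x, y, u1, u2, u3) =>
    (x^3 + y^2 + u1*x + u2*y + u3*x^2, x*y, u1, u2, u3)

/-- The vector field `η₅` on the target of `F₃₂`. -/
noncomputable def eta5 : ℝ × ℝ × ℝ × ℝ × ℝ → ℝ × ℝ × ℝ × ℝ × ℝ :=
  fun (X, Y, U1, U2, U3) =>
    ((5/3)*Y^2 + (1/9)*U2*U3*Y, (-(2/9)*U1 + (2/27)*U3^2)*Y,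
     -(4/3)*U2*Y + (2/9)*U1^2 - (2/27)*U1*U3^2, -(2/9)*U3*Y,
     X + (5/9)*U1*U3 - (4/27)*U3^3)

/-- The lowerable vector field `ξ₅` on the source of `F₃₂`. -/
noncomputable def xi5 : ℝ × ℝ × ℝ × ℝ × ℝ → ℝ × ℝ × ℝ × ℝ × ℝ :=
  fun (x, y, u1, u2, u3) =>
    (-(1/3)*x^3 - (1/9)*u3*x^2 + (-(2/9)*u1 + (2/27)*u3^2)*x,
     (1/3)*x^2*y + (1/9)*u3*x*y,
     -(4/3)*u2*x*y + (2/9)*u1^2 - (2/27)*u1*u3^2,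
     -(2/9)*u3*x*y,
     x^3 + y^2 + u1*x + u2*y + u3*x^2 + (5/9)*u1*u3 - (4/27)*u3^3)

/-- `η₅` is liftable over `F₃₂` via `ξ₅`:
for every `q`, `d(F₃₂)_q (ξ₅ q) = η₅ (F₃₂ q)`. -/
theorem eta5_liftable_over_F32 :
    ∀ q : ℝ × ℝ × ℝ × ℝ × ℝ, fderiv ℝ F32 q (xi5 q) = eta5 (F32 q) := by
  intro q
  obtain ⟨x, y, u1, u2, u3⟩ := q
  have h1 : HasFDerivAt (fun p : ℝ × ℝ × ℝ × ℝ × ℝ => p.1) _ (x, y, u1, u2, u3) :=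
    hasFDerivAt_fst (𝕜 := ℝ)
  have h2 : HasFDerivAt (fun p : ℝ × ℝ × ℝ × ℝ × ℝ => p.2.1) _ (x, y, u1, u2, u3) :=
    (hasFDerivAt_fst (𝕜 := ℝ)).comp _ hasFDerivAt_snd
  have h3 : HasFDerivAt (fun p : ℝ × ℝ × ℝ × ℝ × ℝ => p.2.2.1) _ (x, y, u1, u2, u3) :=
    (hasFDerivAt_fst (𝕜 := ℝ)).comp _ ((hasFDerivAt_snd (𝕜 := ℝ)).comp _ (hasFDerivAt_snd (𝕜 := ℝ)))
  have h4 : HasFDerivAt (fun p : ℝ × ℝ × ℝ × ℝ × ℝ => p.2.2.2.1) _ (x, y, u1, u2, u3) :=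
    (hasFDerivAt_fst (𝕜 := ℝ)).comp _ ((hasFDerivAt_snd (𝕜 := ℝ)).comp _ ((hasFDerivAt_snd (𝕜 := ℝ)).comp _ (hasFDerivAt_snd (𝕜 := ℝ))))
  have h5 : HasFDerivAt (fun p : ℝ × ℝ × ℝ × ℝ × ℝ => p.2.2.2.2) _ (x, y, u1, u2, u3) :=
    (hasFDerivAt_snd (𝕜 := ℝ)).comp _ ((hasFDerivAt_snd (𝕜 := ℝ)).comp _ ((hasFDerivAt_snd (𝕜 := ℝ)).comp _ (hasFDerivAt_snd (𝕜 := ℝ))))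
  have hf1 : HasFDerivAt (𝕜 := ℝ)
      (fun p : ℝ × ℝ × ℝ × ℝ × ℝ =>
        p.1*p.1*p.1 + p.2.1*p.2.1 + p.2.2.1*p.1 + p.2.2.2.1*p.2.1 + p.2.2.2.2*(p.1*p.1)) _
      (x, y, u1, u2, u3) :=
    (((((h1.mul h1).mul h1).add (h2.mul h2)).add (h3.mul h1)).add (h4.mul h2)).add
      (h5.mul (h1.mul h1))
  have hf2 : HasFDerivAt (𝕜 := ℝ) (fun p : ℝ × ℝ × ℝ × ℝ × ℝ => p.1 * p.2.1) _ (x, y, u1, u2, u3) :=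
    h1.mul h2
  have hEq : F32 = fun p : ℝ × ℝ × ℝ × ℝ × ℝ =>
      ((p.1*p.1*p.1 + p.2.1*p.2.1 + p.2.2.1*p.1 + p.2.2.2.1*p.2.1 + p.2.2.2.2*(p.1*p.1),
        p.1 * p.2.1, p.2.2.1, p.2.2.2.1, p.2.2.2.2) : ℝ × ℝ × ℝ × ℝ × ℝ) := by
    funext p
    obtain ⟨a, b, c, d, e⟩ := p
    simp only [F32, Prod.mk.injEq, true_and, and_true]
    ring
  rw [hEq, (hf1.prodMk (hf2.prodMk (h3.prodMk (h4.prodMk h5)))).fderiv]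
  simp only [xi5, eta5, ContinuousLinearMap.prod_apply, ContinuousLinearMap.add_apply,
    ContinuousLinearMap.smulRight_apply, ContinuousLinearMap.smul_apply, ContinuousLinearMap.comp_apply,
    ContinuousLinearMap.coe_fst', ContinuousLinearMap.coe_snd', ContinuousLinearMap.one_apply,
    smul_eq_mul, Prod.mk.injEq, Pi.mul_apply]
  refine ⟨by ring, by ring, by ring, by ring, by ring⟩
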